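/- Let A = (λ₁, λ₂, λ₃, a, b, c) ∈ J₃(ℍ) and μ ∈ ℂ. Then there exists a nonzero vector (x, y, z) ∈ ℍ³ satisfying λ₁x + c·y + b̄·z = μ·x, c̄·x + λ₂y + a·z = μ·y, and b·x + ā·y + λ₃z = μ·z, if and only if det_ℍ(A − μ·I₃) = 0, where A − μ·I₃ denotes the tuple (λ₁ − μ, λ₂ − μ, λ₃ − μ, a, b, c). -/

import Mathlib

noncomputable section

open scoped Quaternion

/-- The complexified quaternions. -/
abbrev Hq : Type := Quaternion ℂ

/-- The determinant of the hermitian matrix `[[λ₁, c, b̄], [c̄, λ₂, a], [b, ā, λ₃]]`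
over the complexified quaternions:
`det_ℍ(A) = λ₁λ₂λ₃ + 2·Re(c·a·b) − λ₁|a|² − λ₂|b|² − λ₃|c|²`. -/
def detH (l1 l2 l3 : ℂ) (a b c : Hq) : ℂ :=
  l1 * l2 * l3 + 2 * (c * a * b).re - l1 * Quaternion.normSq a - l2 * Quaternion.normSq b
    - l3 * Quaternion.normSq c

namespace QEPaux

open Quaternion

/- The "adjugate" columns. -/
def V1 (m2 m3 : ℂ) (a : Hq) : Hq := ((m2 * m3 - normSq a : ℂ) : Hq)
def V2 (m3 : ℂ) (a b c : Hq) : Hq := a * b - (m3 : Hq) * star c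
def V3 (m2 : ℂ) (a b c : Hq) : Hq := star a * star c - (m2 : Hq) * b

def W1 (m3 : ℂ) (a b c : Hq) : Hq := star b * star a - (m3 : Hq) * c
def W2 (m1 m3 : ℂ) (b : Hq) : Hq := ((m1 * m3 - normSq b : ℂ) : Hq)
def W3 (m1 : ℂ) (a b c : Hq) : Hq := b * c - (m1 : Hq) * star a

def U1 (m2 : ℂ) (a b c : Hq) : Hq := c * a - (m2 : Hq) * star b
def U2 (m1 : ℂ) (a b c : Hq) : Hq := star c * star b - (m1 : Hq) * a
def U3 (m1 m2 : ℂ) (c : Hq) : Hq := ((m1 * m2 - normSq c : ℂ) : Hq)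

lemma coe_smul_one (r : ℂ) : (r : Hq) = r • (1 : Hq) := by
  rw [← Quaternion.coe_mul_eq_smul, mul_one]

lemma coe_eq_zero' {r : ℂ} (h : (r : Hq) = 0) : r = 0 :=
  Quaternion.coe_injective (h.trans Quaternion.coe_zero.symm)

section identities

variable (m1 m2 m3 : ℂ) (a b c : Hq)

set_option maxHeartbeats 2000000 in
lemma Bv1 : (m1 : Hq) * V1 m2 m3 a + c * V2 m3 a b c + star b * V3 m2 a b c
    = ((detH m1 m2 m3 a b c : ℂ) : Hq) := by
  ext <;>
    simp [detH, V1, V2, V3, Quaternion.normSq_def', Quaternion.re_mul, Quaternion.imI_mul,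
      Quaternion.imJ_mul, Quaternion.imK_mul, pow_two] <;>
  ring

set_option maxHeartbeats 2000000 in
lemma Bv2 : star c * V1 m2 m3 a + (m2 : Hq) * V2 m3 a b c + a * V3 m2 a b c = 0 := by
  ext <;>
    simp [V1, V2, V3, Quaternion.normSq_def', Quaternion.re_mul, Quaternion.imI_mul,
      Quaternion.imJ_mul, Quaternion.imK_mul, pow_two] <;>
  ring

set_option maxHeartbeats 2000000 in
lemma Bv3 : b * V1 m2 m3 a + star a * V2 m3 a b c + (m3 : Hq) * V3 m2 a b c = 0 := by
  ext <;>
    simp [V1, V2, V3, Quaternion.normSq_def', Quaternion.re_mul, Quaternion.imI_mul,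
      Quaternion.imJ_mul, Quaternion.imK_mul, pow_two] <;>
  ring

set_option maxHeartbeats 2000000 in
lemma Bw1 : (m1 : Hq) * W1 m3 a b c + c * W2 m1 m3 b + star b * W3 m1 a b c = 0 := by
  ext <;>
    simp [W1, W2, W3, Quaternion.normSq_def', Quaternion.re_mul, Quaternion.imI_mul,
      Quaternion.imJ_mul, Quaternion.imK_mul, pow_two] <;>
  ring

set_option maxHeartbeats 2000000 in
lemma Bw2 : star c * W1 m3 a b c + (m2 : Hq) * W2 m1 m3 b + a * W3 m1 a b c
    = ((detH m1 m2 m3 a b c : ℂ) : Hq) := by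
  ext <;>
    simp [detH, W1, W2, W3, Quaternion.normSq_def', Quaternion.re_mul, Quaternion.imI_mul,
      Quaternion.imJ_mul, Quaternion.imK_mul, pow_two] <;>
  ring

set_option maxHeartbeats 2000000 in
lemma Bw3 : b * W1 m3 a b c + star a * W2 m1 m3 b + (m3 : Hq) * W3 m1 a b c = 0 := by
  ext <;>
    simp [W1, W2, W3, Quaternion.normSq_def', Quaternion.re_mul, Quaternion.imI_mul,
      Quaternion.imJ_mul, Quaternion.imK_mul, pow_two] <;>
  ring

set_option maxHeartbeats 2000000 in
lemma Bu1 : (m1 : Hq) * U1 m2 a b c + c * U2 m1 a b c + star b * U3 m1 m2 c = 0 := by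
  ext <;>
    simp [U1, U2, U3, Quaternion.normSq_def', Quaternion.re_mul, Quaternion.imI_mul,
      Quaternion.imJ_mul, Quaternion.imK_mul, pow_two] <;>
  ring

set_option maxHeartbeats 2000000 in
lemma Bu2 : star c * U1 m2 a b c + (m2 : Hq) * U2 m1 a b c + a * U3 m1 m2 c = 0 := by
  ext <;>
    simp [U1, U2, U3, Quaternion.normSq_def', Quaternion.re_mul, Quaternion.imI_mul,
      Quaternion.imJ_mul, Quaternion.imK_mul, pow_two] <;>
  ring

set_option maxHeartbeats 2000000 in
lemma Bu3 : b * U1 m2 a b c + star a * U2 m1 a b c + (m3 : Hq) * U3 m1 m2 c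
    = ((detH m1 m2 m3 a b c : ℂ) : Hq) := by
  ext <;>
    simp [detH, U1, U2, U3, Quaternion.normSq_def', Quaternion.re_mul, Quaternion.imI_mul,
      Quaternion.imJ_mul, Quaternion.imK_mul, pow_two] <;>
  ring

end identities

/-- Generic linear combination of the three kernel equations. -/
lemma combo (α β γ p1 q1 r1 p2 q2 r2 p3 q3 r3 x y z d : Hq)
    (h1 : α * p1 + β * p2 + γ * p3 = d) (h2 : α * q1 + β * q2 + γ * q3 = 0)
    (h3 : α * r1 + β * r2 + γ * r3 = 0)
    (e1 : p1 * x + q1 * y + r1 * z = 0) (e2 : p2 * x + q2 * y + r2 * z = 0)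
    (e3 : p3 * x + q3 * y + r3 * z = 0) :
    d * x = 0 := by
  calc d * x = (α * p1 + β * p2 + γ * p3) * x + (α * q1 + β * q2 + γ * q3) * y
        + (α * r1 + β * r2 + γ * r3) * z := by rw [h1, h2, h3]; simp
    _ = α * (p1 * x + q1 * y + r1 * z) + β * (p2 * x + q2 * y + r2 * z)
        + γ * (p3 * x + q3 * y + r3 * z) := by noncomm_ring
    _ = 0 := by rw [e1, e2, e3]; simp

end QEPaux

open QEPaux Quaternion in
set_option maxHeartbeats 2000000 in
/-- The quaternionic eigenvalue problem: `μ ∈ ℂ` is a left eigenvalue of the hermitian matrix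
`A = [[λ₁, c, b̄], [c̄, λ₂, a], [b, ā, λ₃]] ∈ J₃(ℍ)` (i.e. there is a nonzero `(x,y,z) ∈ ℍ³`
with `A·(x,y,z) = μ·(x,y,z)`) if and only if `det_ℍ(A − μ·I₃) = 0`. -/
theorem quaternionic_eigenvalue_problem (l1 l2 l3 μ : ℂ) (a b c : Hq) :
    (∃ v : Hq × Hq × Hq, v ≠ 0 ∧
        l1 • v.1 + c * v.2.1 + star b * v.2.2 = μ • v.1 ∧
        star c * v.1 + l2 • v.2.1 + a * v.2.2 = μ • v.2.1 ∧
        b * v.1 + star a * v.2.1 + l3 • v.2.2 = μ • v.2.2) ↔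
      detH (l1 - μ) (l2 - μ) (l3 - μ) a b c = 0 := by
  set m1 : ℂ := l1 - μ with hm1def
  set m2 : ℂ := l2 - μ with hm2def
  set m3 : ℂ := l3 - μ with hm3def
  set D : ℂ := detH m1 m2 m3 a b c with hDdef
  -- reformulation of the three equations in kernel form
  have conv1 : ∀ x y z : Hq,
      ((m1 : Hq) * x + c * y + star b * z = 0) ↔ (l1 • x + c * y + star b * z = μ • x) := by
    intro x y z
    rw [Quaternion.coe_mul_eq_smul, hm1def]
    constructor <;> intro h <;> linear_combination (norm := module) h
  have conv2 : ∀ x y z : Hq,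
      (star c * x + (m2 : Hq) * y + a * z = 0) ↔ (star c * x + l2 • y + a * z = μ • y) := by
    intro x y z
    rw [Quaternion.coe_mul_eq_smul, hm2def]
    constructor <;> intro h <;> linear_combination (norm := module) h
  have conv3 : ∀ x y z : Hq,
      (b * x + star a * y + (m3 : Hq) * z = 0) ↔ (b * x + star a * y + l3 • z = μ • z) := by
    intro x y z
    rw [Quaternion.coe_mul_eq_smul, hm3def]
    constructor <;> intro h <;> linear_combination (norm := module) h
  constructor
  · rintro ⟨⟨x, y, z⟩, hv, h1, h2, h3⟩
    simp only at h1 h2 h3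
    have e1 := (conv1 x y z).2 h1
    have e2 := (conv2 x y z).2 h2
    have e3 := (conv3 x y z).2 h3
    -- starred adjugate identities
    have s1 := congrArg star (Bv1 m1 m2 m3 a b c)
    have s2 := congrArg star (Bv2 m2 m3 a b c)
    have s3 := congrArg star (Bv3 m2 m3 a b c)
    have t1 := congrArg star (Bw1 m1 m3 a b c)
    have t2 := congrArg star (Bw2 m1 m2 m3 a b c)
    have t3 := congrArg star (Bw3 m1 m3 a b c)
    have u1 := congrArg star (Bu1 m1 m2 a b c)
    have u2 := congrArg star (Bu2 m1 m2 a b c)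
    have u3 := congrArg star (Bu3 m1 m2 m3 a b c)
    simp only [star_add, star_mul, star_star, Quaternion.star_coe, star_zero] at s1 s2 s3 t1 t2 t3 u1 u2 u3
    simp only [star_add (R := Quaternion ℂ), star_mul (R := Quaternion ℂ), star_star,
      Quaternion.star_coe] at s2 s3 t2 t3 u2 u3
    have hx : (D : Hq) * x = 0 :=
      combo (star (V1 m2 m3 a)) (star (V2 m3 a b c)) (star (V3 m2 a b c))
        ((m1 : Hq)) c (star b) (star c) ((m2 : Hq)) a b (star a) ((m3 : Hq)) x y z ((D : ℂ) : Hq)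
        s1 s2 s3 e1 e2 e3
    have hy : (D : Hq) * y = 0 := by
      refine combo (star (W1 m3 a b c)) (star (W2 m1 m3 b)) (star (W3 m1 a b c))
        c ((m1 : Hq)) (star b) ((m2 : Hq)) (star c) a (star a) b ((m3 : Hq)) y x z ((D : ℂ) : Hq)
        t2 t1 t3 ?_ ?_ ?_
      · have h := e1; abel_nf at h ⊢; exact h
      · have h := e2; abel_nf at h ⊢; exact h
      · have h := e3; abel_nf at h ⊢; exact h
    have hz : (D : Hq) * z = 0 := by
      refine combo (star (U1 m2 a b c)) (star (U2 m1 a b c)) (star (U3 m1 m2 c))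
        (star b) c ((m1 : Hq)) a ((m2 : Hq)) (star c) ((m3 : Hq)) (star a) b z y x ((D : ℂ) : Hq)
        u3 u2 u1 ?_ ?_ ?_
      · have h := e1; abel_nf at h ⊢; exact h
      · have h := e2; abel_nf at h ⊢; exact h
      · have h := e3; abel_nf at h ⊢; exact h
    by_contra hD
    rw [Quaternion.coe_mul_eq_smul] at hx hy hz
    have hx0 : x = 0 := (smul_eq_zero.mp hx).resolve_left hD
    have hy0 : y = 0 := (smul_eq_zero.mp hy).resolve_left hD
    have hz0 : z = 0 := (smul_eq_zero.mp hz).resolve_left hD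
    exact hv (by simp [Prod.ext_iff, hx0, hy0, hz0])
  · intro hD
    by_cases hV : (V1 m2 m3 a, V2 m3 a b c, V3 m2 a b c) ≠ (0 : Hq × Hq × Hq)
    · refine ⟨_, hV, ?_, ?_, ?_⟩
      · exact (conv1 _ _ _).1 (by rw [Bv1, ← hDdef, hD, Quaternion.coe_zero])
      · exact (conv2 _ _ _).1 (Bv2 m2 m3 a b c)
      · exact (conv3 _ _ _).1 (Bv3 m2 m3 a b c)
    · by_cases hW : (W1 m3 a b c, W2 m1 m3 b, W3 m1 a b c) ≠ (0 : Hq × Hq × Hq)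
      · refine ⟨_, hW, ?_, ?_, ?_⟩
        · exact (conv1 _ _ _).1 (Bw1 m1 m3 a b c)
        · exact (conv2 _ _ _).1 (by rw [Bw2, ← hDdef, hD, Quaternion.coe_zero])
        · exact (conv3 _ _ _).1 (Bw3 m1 m3 a b c)
      · by_cases hU : (U1 m2 a b c, U2 m1 a b c, U3 m1 m2 c) ≠ (0 : Hq × Hq × Hq)
        · refine ⟨_, hU, ?_, ?_, ?_⟩
          · exact (conv1 _ _ _).1 (Bu1 m1 m2 a b c)
          · exact (conv2 _ _ _).1 (Bu2 m1 m2 a b c)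
          · exact (conv3 _ _ _).1 (by rw [Bu3, ← hDdef, hD, Quaternion.coe_zero])
        -- the degenerate case: all adjugate columns vanish
        · push_neg at hV hW hU
          rw [Prod.ext_iff] at hV hW hU
          have hV1 := hV.1
          have hV2 := (Prod.ext_iff.mp hV.2).1
          have hV3 := (Prod.ext_iff.mp hV.2).2
          have hW1 := hW.1
          have hW2 := (Prod.ext_iff.mp hW.2).1
          have hW3 := (Prod.ext_iff.mp hW.2).2
          have hU1 := hU.1
          have hU2 := (Prod.ext_iff.mp hU.2).1
          have hU3 := (Prod.ext_iff.mp hU.2).2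
          simp only [V1, V2, V3, W1, W2, W3, U1, U2, U3, Prod.fst_zero, Prod.snd_zero,
            sub_eq_zero] at hV1 hV2 hV3 hW1 hW2 hW3 hU1 hU2 hU3
          -- scalar relations
          have hA : m2 * m3 = normSq a := sub_eq_zero.mp (coe_eq_zero' hV1)
          have hB : m1 * m3 = normSq b := sub_eq_zero.mp (coe_eq_zero' hW2)
          have hC : m1 * m2 = normSq c := sub_eq_zero.mp (coe_eq_zero' hU3)
          by_cases hm1 : m1 ≠ 0
          · -- eigenvector (c, -m1, 0)
            refine ⟨(c, ((-m1 : ℂ) : Hq), 0), ?_, ?_, ?_, ?_⟩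
            · intro h
              exact hm1 (by
                simpa [neg_eq_zero] using
                  coe_eq_zero' (Prod.ext_iff.mp (Prod.ext_iff.mp h).2).1)
            · refine (conv1 _ _ _).1 ?_
              simp only [mul_zero, add_zero, Quaternion.coe_mul_eq_smul,
                Quaternion.mul_coe_eq_smul]
              module
            · refine (conv2 _ _ _).1 ?_
              have hc' : star c * c = ((m1 * m2 : ℂ) : Hq) := by
                rw [Quaternion.star_mul_self, hC]
              simp only [hc', mul_zero, add_zero, coe_smul_one, Quaternion.coe_mul_eq_smul,
                Quaternion.mul_coe_eq_smul, smul_mul_assoc, one_mul, smul_smul]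
              module
            · refine (conv3 _ _ _).1 ?_
              simp only [hW3, mul_zero, add_zero, Quaternion.coe_mul_eq_smul,
                Quaternion.mul_coe_eq_smul]
              module
          · push_neg at hm1
            by_cases hm2 : m2 ≠ 0
            · -- eigenvector (-m2, star c, 0)
              refine ⟨(((-m2 : ℂ) : Hq), star c, 0), ?_, ?_, ?_, ?_⟩
              · intro h
                exact hm2 (by
                  simpa [neg_eq_zero] using coe_eq_zero' (Prod.ext_iff.mp h).1)
              · refine (conv1 _ _ _).1 ?_
                have hc' : c * star c = ((m1 * m2 : ℂ) : Hq) := by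
                  rw [Quaternion.self_mul_star, hC]
                simp only [hc', mul_zero, add_zero, coe_smul_one, Quaternion.coe_mul_eq_smul,
                  Quaternion.mul_coe_eq_smul, smul_mul_assoc, one_mul, smul_smul]
                module
              · refine (conv2 _ _ _).1 ?_
                simp only [mul_zero, add_zero, Quaternion.coe_mul_eq_smul,
                  Quaternion.mul_coe_eq_smul]
                module
              · refine (conv3 _ _ _).1 ?_
                simp only [hV3, mul_zero, add_zero, Quaternion.coe_mul_eq_smul,
                  Quaternion.mul_coe_eq_smul]
                module
            · push_neg at hm2
              by_cases hm3 : m3 ≠ 0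
              · -- eigenvector (-m3, 0, b)
                refine ⟨(((-m3 : ℂ) : Hq), 0, b), ?_, ?_, ?_, ?_⟩
                · intro h
                  exact hm3 (by
                    simpa [neg_eq_zero] using coe_eq_zero' (Prod.ext_iff.mp h).1)
                · refine (conv1 _ _ _).1 ?_
                  have hb' : star b * b = ((m1 * m3 : ℂ) : Hq) := by
                    rw [Quaternion.star_mul_self, hB]
                  simp only [hb', mul_zero, add_zero, zero_add, coe_smul_one,
                    Quaternion.coe_mul_eq_smul, Quaternion.mul_coe_eq_smul, smul_mul_assoc,
                    one_mul, smul_smul]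
                  module
                · refine (conv2 _ _ _).1 ?_
                  simp only [hV2, mul_zero, add_zero, zero_add,
                    Quaternion.coe_mul_eq_smul, Quaternion.mul_coe_eq_smul]
                  module
                · refine (conv3 _ _ _).1 ?_
                  simp only [mul_zero, add_zero, zero_add,
                    Quaternion.coe_mul_eq_smul, Quaternion.mul_coe_eq_smul]
                  module
              · push_neg at hm3
                -- now m1 = m2 = m3 = 0; all norms vanish and all products vanish
                have ZA : normSq a = 0 := by rw [← hA, hm2, zero_mul]
                have ZB : normSq b = 0 := by rw [← hB, hm1, zero_mul]
                have ZC : normSq c = 0 := by rw [← hC, hm1, zero_mul]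
                have Z1 : a * b = 0 := by rw [hV2, hm3, Quaternion.coe_zero, zero_mul]
                have Z2 : star a * star c = 0 := by
                  rw [hV3, hm2, Quaternion.coe_zero, zero_mul]
                have Z3 : star b * star a = 0 := by
                  rw [hW1, hm3, Quaternion.coe_zero, zero_mul]
                have Z4 : b * c = 0 := by rw [hW3, hm1, Quaternion.coe_zero, zero_mul]
                have Z5 : c * a = 0 := by rw [hU1, hm2, Quaternion.coe_zero, zero_mul]
                have Z6 : star c * star b = 0 := by
                  rw [hU2, hm1, Quaternion.coe_zero, zero_mul]
                by_cases ha : a ≠ 0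
                · refine ⟨(0, a, star a), ?_, ?_, ?_, ?_⟩
                  · intro h
                    exact ha (Prod.ext_iff.mp (Prod.ext_iff.mp h).2).1
                  · refine (conv1 _ _ _).1 ?_
                    simp [Z5, Z3, hm1]
                  · refine (conv2 _ _ _).1 ?_
                    simp [Quaternion.self_mul_star, ZA, hm2]
                  · refine (conv3 _ _ _).1 ?_
                    simp [Quaternion.star_mul_self, ZA, hm3]
                · push_neg at ha
                  by_cases hb : b ≠ 0
                  · refine ⟨(star b, 0, b), ?_, ?_, ?_, ?_⟩
                    · intro h
                      exact hb (by simpa using (Prod.ext_iff.mp (Prod.ext_iff.mp h).2).2)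
                    · refine (conv1 _ _ _).1 ?_
                      simp [Quaternion.star_mul_self, ZB, hm1]
                    · refine (conv2 _ _ _).1 ?_
                      simp [Z6, Z1, hm2]
                    · refine (conv3 _ _ _).1 ?_
                      simp [Quaternion.self_mul_star, ZB, hm3]
                  · push_neg at hb
                    by_cases hc : c ≠ 0
                    · refine ⟨(c, star c, 0), ?_, ?_, ?_, ?_⟩
                      · intro h
                        exact hc (Prod.ext_iff.mp h).1
                      · refine (conv1 _ _ _).1 ?_
                        simp [Quaternion.self_mul_star, ZC, hm1]
                      · refine (conv2 _ _ _).1 ?_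
                        simp [Quaternion.star_mul_self, ZC, hm2]
                      · refine (conv3 _ _ _).1 ?_
                        simp [Z4, Z2, hm3]
                    · push_neg at hc
                      refine ⟨(1, 0, 0), ?_, ?_, ?_, ?_⟩
                      · simp [Prod.ext_iff]
                      · refine (conv1 _ _ _).1 ?_
                        simp [hm1]
                      · refine (conv2 _ _ _).1 ?_
                        simp [hc]
                      · refine (conv3 _ _ _).1 ?_
                        simp [hb]
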